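/- Let $n \ge 1$. The ring $C_n' := \mathbb{C}[x,y]/(x^{n+1}, x^n y, y^2)$ is isomorphic to the fibre product of rings $B_{n-1} \times_{A_{n-1}} A_n$, where $B_{n-1} = \mathbb{C}[x,y]/(x^n, y^2)$, $A_n = \mathbb{C}[t]/(t^{n+1})$, $A_{n-1} = \mathbb{C}[t]/(t^n)$, the map $B_{n-1} \to A_{n-1}$ sends $x \mapsto t$, $y \mapsto 0$, and the map $A_n \to A_{n-1}$ is the natural quotient; the isomorphism sends $x \mapsto (x, t)$ and $y \mapsto (y, 0)$. -/

import Mathlib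

open MvPolynomial

noncomputable section

/-- `ℂ[t]/(t^m)` (so `m = n+1` gives `A_n`). -/
def AJ (m : ℕ) : Ideal (Polynomial ℂ) := Ideal.span {(Polynomial.X : Polynomial ℂ) ^ m}
abbrev AQ (m : ℕ) : Type := Polynomial ℂ ⧸ AJ m
def tQ (m : ℕ) : AQ m := Ideal.Quotient.mk (AJ m) Polynomial.X

/-- `B_{n-1} = ℂ[x,y]/(x^n, y^2)`. -/
def BJ (n : ℕ) : Ideal (MvPolynomial (Fin 2) ℂ) :=
  Ideal.span {(X 0 : MvPolynomial (Fin 2) ℂ) ^ n, (X 1 : MvPolynomial (Fin 2) ℂ) ^ 2}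
abbrev BQ (n : ℕ) : Type := MvPolynomial (Fin 2) ℂ ⧸ BJ n
def xBQ (n : ℕ) : BQ n := Ideal.Quotient.mk (BJ n) (X 0)
def yBQ (n : ℕ) : BQ n := Ideal.Quotient.mk (BJ n) (X 1)

/-- `C_n' = ℂ[x,y]/(x^{n+1}, x^n y, y^2)`. -/
def CJ (n : ℕ) : Ideal (MvPolynomial (Fin 2) ℂ) :=
  Ideal.span {(X 0 : MvPolynomial (Fin 2) ℂ) ^ (n + 1),
    (X 0 : MvPolynomial (Fin 2) ℂ) ^ n * (X 1 : MvPolynomial (Fin 2) ℂ),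
    (X 1 : MvPolynomial (Fin 2) ℂ) ^ 2}
abbrev CQ (n : ℕ) : Type := MvPolynomial (Fin 2) ℂ ⧸ CJ n
def xCQ (n : ℕ) : CQ n := Ideal.Quotient.mk (CJ n) (X 0)
def yCQ (n : ℕ) : CQ n := Ideal.Quotient.mk (CJ n) (X 1)

/-! ### Auxiliary definitions and lemmas -/

/-- Substitution `x ↦ X`, `y ↦ 0`. -/
def ev0 : MvPolynomial (Fin 2) ℂ →ₐ[ℂ] Polynomial ℂ :=
  aeval ![Polynomial.X, 0]

/-- Embedding `ℂ[t] → ℂ[x,y]`, `t ↦ x`. -/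
def emb : Polynomial ℂ →ₐ[ℂ] MvPolynomial (Fin 2) ℂ :=
  Polynomial.aeval (X 0)

lemma ev0_X0 : ev0 (X 0) = Polynomial.X := by simp [ev0]
lemma ev0_X1 : ev0 (X 1) = 0 := by simp [ev0]
lemma emb_X : emb Polynomial.X = X 0 := by simp [emb]

lemma ev0_comp_emb : ev0.comp emb = AlgHom.id ℂ (Polynomial ℂ) := by
  apply Polynomial.algHom_ext
  simp [emb_X, ev0_X0]

lemma emb_comp_ev0 : emb.comp ev0 = aeval ![X 0, (0 : MvPolynomial (Fin 2) ℂ)] := by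
  apply MvPolynomial.algHom_ext
  intro i
  fin_cases i <;> simp [ev0, emb]

lemma sub_aeval_mem (p : MvPolynomial (Fin 2) ℂ) :
    p - aeval ![X 0, (0 : MvPolynomial (Fin 2) ℂ)] p ∈
      Ideal.span {(X 1 : MvPolynomial (Fin 2) ℂ)} := by
  induction p using MvPolynomial.induction_on with
  | C a => simp
  | add p q hp hq =>
      have : p + q - aeval ![X 0, (0 : MvPolynomial (Fin 2) ℂ)] (p + q)
          = (p - aeval ![X 0, (0 : MvPolynomial (Fin 2) ℂ)] p)
            + (q - aeval ![X 0, (0 : MvPolynomial (Fin 2) ℂ)] q) := by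
        rw [map_add]; ring
      rw [this]
      exact Ideal.add_mem _ hp hq
  | mul_X p i hp =>
      fin_cases i
      · show p * X 0 - aeval ![X 0, (0 : MvPolynomial (Fin 2) ℂ)] (p * X 0)
            ∈ Ideal.span {(X 1 : MvPolynomial (Fin 2) ℂ)}
        have : p * X 0 - aeval ![X 0, (0 : MvPolynomial (Fin 2) ℂ)] (p * X 0)
            = (p - aeval ![X 0, (0 : MvPolynomial (Fin 2) ℂ)] p) * X 0 := by
          rw [map_mul, aeval_X]
          simp only [Matrix.cons_val_zero]
          ring
        rw [this]
        exact Ideal.mul_mem_right _ _ hp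
      · show p * X 1 - aeval ![X 0, (0 : MvPolynomial (Fin 2) ℂ)] (p * X 1)
            ∈ Ideal.span {(X 1 : MvPolynomial (Fin 2) ℂ)}
        have : p * X 1 - aeval ![X 0, (0 : MvPolynomial (Fin 2) ℂ)] (p * X 1)
            = p * X 1 := by
          rw [map_mul, aeval_X]
          simp
        rw [this]
        exact Ideal.mul_mem_left _ _ (Ideal.subset_span rfl)

/-- The key injectivity lemma. -/
lemma key (n : ℕ) (f : MvPolynomial (Fin 2) ℂ) (h1 : f ∈ BJ n)
    (h2 : ev0 f ∈ AJ (n + 1)) : f ∈ CJ n := by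
  obtain ⟨u, w, rfl⟩ := Ideal.mem_span_pair.mp h1
  have h2' : (Polynomial.X : Polynomial ℂ) ^ (n + 1) ∣ ev0 u * Polynomial.X ^ n := by
    have := Ideal.mem_span_singleton.mp h2
    simpa [map_add, map_mul, map_pow, ev0_X0, ev0_X1] using this
  have hX : (Polynomial.X : Polynomial ℂ) ∣ ev0 u := by
    have h2'' : Polynomial.X * (Polynomial.X : Polynomial ℂ) ^ n ∣ ev0 u * Polynomial.X ^ n := by
      rwa [← pow_succ'] 
    exact (mul_dvd_mul_iff_right (pow_ne_zero n Polynomial.X_ne_zero)).mp h2''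
  obtain ⟨U, hU⟩ := hX
  obtain ⟨r, hr⟩ := Ideal.mem_span_singleton.mp (sub_aeval_mem u)
  have hsub0 : aeval ![X 0, (0 : MvPolynomial (Fin 2) ℂ)] u = X 0 * emb U := by
    rw [← AlgHom.congr_fun emb_comp_ev0 u]
    simp only [AlgHom.comp_apply, hU, map_mul, emb_X]
  have hu : u = X 0 * emb U + X 1 * r := by
    rw [← hsub0]
    linear_combination hr
  have m1 : (X 0 : MvPolynomial (Fin 2) ℂ) ^ (n + 1) ∈ CJ n :=
    Ideal.subset_span (by simp)
  have m2 : (X 0 : MvPolynomial (Fin 2) ℂ) ^ n * X 1 ∈ CJ n :=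
    Ideal.subset_span (by simp)
  have m3 : (X 1 : MvPolynomial (Fin 2) ℂ) ^ 2 ∈ CJ n :=
    Ideal.subset_span (by simp)
  have hrw : u * X 0 ^ n + w * X 1 ^ 2
      = emb U * X 0 ^ (n + 1) + r * (X 0 ^ n * X 1) + w * X 1 ^ 2 := by
    rw [hu]; ring
  rw [hrw]
  exact Ideal.add_mem _ (Ideal.add_mem _ (Ideal.mul_mem_left _ _ m1)
    (Ideal.mul_mem_left _ _ m2)) (Ideal.mul_mem_left _ _ m3)

/-- The map `ℂ[x,y] → B_{n-1} × A_n`, `x ↦ (x,t)`, `y ↦ (y,0)`. -/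
def φA (n : ℕ) : MvPolynomial (Fin 2) ℂ →ₐ[ℂ] BQ n × AQ (n + 1) :=
  aeval ![(xBQ n, tQ (n + 1)), (yBQ n, 0)]

lemma φA_apply (n : ℕ) (f : MvPolynomial (Fin 2) ℂ) :
    φA n f = (Ideal.Quotient.mk (BJ n) f, Ideal.Quotient.mk (AJ (n + 1)) (ev0 f)) := by
  have h1 : (AlgHom.fst ℂ (BQ n) (AQ (n + 1))).comp (φA n)
      = Ideal.Quotient.mkₐ ℂ (BJ n) := by
    apply MvPolynomial.algHom_ext
    intro i
    fin_cases i <;> (simp [φA, xBQ, yBQ])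
  have h2 : (AlgHom.snd ℂ (BQ n) (AQ (n + 1))).comp (φA n)
      = (Ideal.Quotient.mkₐ ℂ (AJ (n + 1))).comp ev0 := by
    apply MvPolynomial.algHom_ext
    intro i
    fin_cases i <;> (simp [φA, ev0, tQ])
  exact Prod.ext (AlgHom.congr_fun h1 f) (AlgHom.congr_fun h2 f)

/-- `C_n' = ℂ[x,y]/(x^{n+1}, x^n y, y^2)` is isomorphic to the fibre product
`B_{n-1} ×_{A_{n-1}} A_n`, where `g : B_{n-1} → A_{n-1}` sends `x ↦ t`, `y ↦ 0`,
and `A_n → A_{n-1}` is the natural quotient (`t ↦ t`); the isomorphism sends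
`x ↦ (x, t)` and `y ↦ (y, 0)`. The fibre product is realised as the equalizer
subalgebra of `B_{n-1} × A_n`. -/
theorem statement7 (n : ℕ) (hn : 1 ≤ n)
    (g : BQ n →ₐ[ℂ] AQ n) (hgx : g (xBQ n) = tQ n) (hgy : g (yBQ n) = 0)
    (h : AQ (n + 1) →ₐ[ℂ] AQ n) (hh : h (tQ (n + 1)) = tQ n) :
    ∃ e : CQ n ≃ₐ[ℂ]
        (AlgHom.equalizer (g.comp (AlgHom.fst ℂ (BQ n) (AQ (n + 1))))
          (h.comp (AlgHom.snd ℂ (BQ n) (AQ (n + 1))))),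
      (e (xCQ n) : BQ n × AQ (n + 1)) = (xBQ n, tQ (n + 1)) ∧
      (e (yCQ n) : BQ n × AQ (n + 1)) = (yBQ n, 0) := by
  classical
  -- g and h in terms of evaluation
  have hg : ∀ f : MvPolynomial (Fin 2) ℂ,
      g (Ideal.Quotient.mk (BJ n) f) = Ideal.Quotient.mk (AJ n) (ev0 f) := by
    have hcomp : g.comp (Ideal.Quotient.mkₐ ℂ (BJ n))
        = (Ideal.Quotient.mkₐ ℂ (AJ n)).comp ev0 := by
      apply MvPolynomial.algHom_ext
      intro i
      fin_cases i
      · simpa [ev0, tQ, xBQ] using hgx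
      · simpa [ev0, yBQ] using hgy
    exact fun f => AlgHom.congr_fun hcomp f
  have hh' : ∀ p : Polynomial ℂ,
      h (Ideal.Quotient.mk (AJ (n + 1)) p) = Ideal.Quotient.mk (AJ n) p := by
    have hcomp : h.comp (Ideal.Quotient.mkₐ ℂ (AJ (n + 1)))
        = Ideal.Quotient.mkₐ ℂ (AJ n) := by
      apply Polynomial.algHom_ext
      simpa [tQ] using hh
    exact fun p => AlgHom.congr_fun hcomp p
  -- the lift ψ : CQ n →ₐ BQ n × AQ (n+1)
  have hker : ∀ f ∈ CJ n, φA n f = 0 := by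
    have : CJ n ≤ RingHom.ker (φA n).toRingHom := by
      rw [CJ, Ideal.span_le]
      rintro p hp
      simp only [Set.mem_insert_iff, Set.mem_singleton_iff] at hp
      have hmem0 : (X 0 : MvPolynomial (Fin 2) ℂ) ^ n ∈ BJ n :=
        Ideal.subset_span (by simp)
      have hmem1 : (X 1 : MvPolynomial (Fin 2) ℂ) ^ 2 ∈ BJ n :=
        Ideal.subset_span (by simp)
      rcases hp with rfl | rfl | rfl <;>
        · rw [SetLike.mem_coe, RingHom.mem_ker]
          show φA n _ = 0
          rw [φA_apply]
          refine Prod.ext ?_ ?_ <;>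
            simp only [Prod.fst_zero, Prod.snd_zero, Ideal.Quotient.eq_zero_iff_mem] <;>
            first
            | exact (pow_succ (X 0 : MvPolynomial (Fin 2) ℂ) n) ▸
                Ideal.mul_mem_right _ _ hmem0
            | exact Ideal.mul_mem_right _ _ hmem0
            | exact hmem1
            | · show ev0 _ ∈ AJ (n + 1)
                simp only [map_mul, map_pow, ev0_X0, ev0_X1]
                first
                | exact Ideal.subset_span rfl
                | simpa using (AJ (n + 1)).zero_mem
    exact fun f hf => this hf
  let ψ : CQ n →ₐ[ℂ] BQ n × AQ (n + 1) := Ideal.Quotient.liftₐ (CJ n) (φA n) hker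
  have ψ_mk : ∀ f, ψ (Ideal.Quotient.mk (CJ n) f) = φA n f := fun f => by
    simp [ψ, Ideal.Quotient.liftₐ_apply, Ideal.Quotient.lift_mk]; rfl
  set G1 := g.comp (AlgHom.fst ℂ (BQ n) (AQ (n + 1))) with hG1
  set G2 := h.comp (AlgHom.snd ℂ (BQ n) (AQ (n + 1))) with hG2
  have hmemE : ∀ z : CQ n, ψ z ∈ AlgHom.equalizer G1 G2 := by
    intro z
    obtain ⟨f, rfl⟩ := Ideal.Quotient.mk_surjective z
    rw [AlgHom.mem_equalizer, ψ_mk, φA_apply, hG1, hG2]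
    show g (Ideal.Quotient.mk (BJ n) f) = h (Ideal.Quotient.mk (AJ (n + 1)) (ev0 f))
    rw [hg, hh']
  let ψ' : CQ n →ₐ[ℂ] AlgHom.equalizer G1 G2 :=
    ψ.codRestrict (AlgHom.equalizer G1 G2) hmemE
  have ψ'_coe : ∀ z, (ψ' z : BQ n × AQ (n + 1)) = ψ z := fun z => rfl
  have hinj : Function.Injective ψ' := by
    intro a b hab
    obtain ⟨f, rfl⟩ := Ideal.Quotient.mk_surjective a
    obtain ⟨f', rfl⟩ := Ideal.Quotient.mk_surjective b
    have hψ : ψ (Ideal.Quotient.mk (CJ n) f) = ψ (Ideal.Quotient.mk (CJ n) f') := by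
      rw [← ψ'_coe, ← ψ'_coe, hab]
    rw [ψ_mk, ψ_mk, φA_apply, φA_apply] at hψ
    have e1 := congrArg Prod.fst hψ
    have e2 := congrArg Prod.snd hψ
    simp only at e1 e2
    rw [Ideal.Quotient.eq]
    refine key n _ (Ideal.Quotient.eq.mp e1) ?_
    rw [map_sub]
    exact Ideal.Quotient.eq.mp e2
  have hsurj : Function.Surjective ψ' := by
    rintro ⟨⟨b, a⟩, hz⟩
    obtain ⟨F, rfl⟩ := Ideal.Quotient.mk_surjective b
    obtain ⟨p, rfl⟩ := Ideal.Quotient.mk_surjective a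
    rw [AlgHom.mem_equalizer, hG1, hG2] at hz
    have hz' : Ideal.Quotient.mk (AJ n) (ev0 F) = Ideal.Quotient.mk (AJ n) p := by
      rw [← hg, ← hh']
      exact hz
    obtain ⟨q, hq⟩ := Ideal.mem_span_singleton.mp (Ideal.Quotient.eq.mp hz')
    refine ⟨Ideal.Quotient.mk (CJ n) (F - X 0 ^ n * emb q), Subtype.ext ?_⟩
    rw [ψ'_coe, ψ_mk, φA_apply]
    refine Prod.ext ?_ ?_
    · show Ideal.Quotient.mk (BJ n) (F - X 0 ^ n * emb q) = Ideal.Quotient.mk (BJ n) F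
      rw [Ideal.Quotient.eq]
      have : F - X 0 ^ n * emb q - F = -(X 0 ^ n * emb q) := by ring
      rw [this]
      exact neg_mem (Ideal.mul_mem_right _ _ (Ideal.subset_span (by simp)))
    · show Ideal.Quotient.mk (AJ (n + 1)) (ev0 (F - X 0 ^ n * emb q))
        = Ideal.Quotient.mk (AJ (n + 1)) p
      have hev : ev0 (F - X 0 ^ n * emb q) = p := by
        have h1 : ev0 (emb q) = q := AlgHom.congr_fun ev0_comp_emb q
        rw [map_sub, map_mul, map_pow, ev0_X0, h1]
        linear_combination hq
      rw [hev]
  refine ⟨AlgEquiv.ofBijective ψ' ⟨hinj, hsurj⟩, ?_, ?_⟩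
  · show (ψ' (xCQ n) : BQ n × AQ (n + 1)) = _
    rw [ψ'_coe, xCQ, ψ_mk, φA_apply, ev0_X0]
    rfl
  · show (ψ' (yCQ n) : BQ n × AQ (n + 1)) = _
    rw [ψ'_coe, yCQ, ψ_mk, φA_apply, ev0_X1]
    rfl

end
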